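/- Let k be a field and let η_1 > η_2 > … > η_s be strictly decreasing positive integers. For every f ∈ P_η^0 ⊆ k⟦x,y⟧ there exist units c_1, …, c_s of k⟦x,y⟧ such that f = ∏_{i=1}^{s} (y^{η_i} + c_i·x); that is, f factorizes as a product f_1·f_2⋯f_s with each f_i ∈ P_{(η_i)}^0. -/

import Mathlib

open MvPowerSeries Finset

section Aux
variable {k : Type*} [Field k]

private lemma sum_shift' {A : Type*} [AddCommMonoid A] (n m : ℕ) (F : ℕ → A) :
    ∑ i ∈ Icc (n + 1) (m + 1), F i = ∑ i ∈ Icc n m, F (i + 1) := by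
  rw [← Finset.map_add_right_Icc n m 1, Finset.sum_map]
  rfl

private lemma prod_shift' {A : Type*} [CommMonoid A] (n m : ℕ) (F : ℕ → A) :
    ∏ i ∈ Icc (n + 1) (m + 1), F i = ∏ i ∈ Icc n m, F (i + 1) := by
  rw [← Finset.map_add_right_Icc n m 1, Finset.prod_map]
  rfl

private lemma sum_shift2 {A : Type*} [AddCommMonoid A] (m : ℕ) (F : ℕ → A) :
    ∑ i ∈ Icc 2 (m + 1), F i = ∑ i ∈ Icc 1 m, F (i + 1) :=
  sum_shift' 1 m F

private lemma prod_shift2 {A : Type*} [CommMonoid A] (m : ℕ) (F : ℕ → A) :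
    ∏ i ∈ Icc 2 (m + 1), F i = ∏ i ∈ Icc 1 m, F (i + 1) :=
  prod_shift' 1 m F

private lemma icc_insert (n : ℕ) : Icc 1 (n + 1) = insert 1 (Icc 2 (n + 1)) := by
  ext i; simp only [mem_Icc, mem_insert]; omega

private lemma ydvd_all_eq_zero {u : MvPowerSeries (Fin 2) k}
    (h : ∀ q, (X 1 : MvPowerSeries (Fin 2) k) ^ q ∣ u) : u = 0 := by
  ext d
  have := (X_pow_dvd_iff.mp (h (d 1 + 1))) d (lt_add_one _)
  simpa using this

private lemma inv_sub_dvd (q : ℕ) {u v : MvPowerSeries (Fin 2) k}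
    (hu : IsUnit u) (hv : IsUnit v) (h : (X 1 : MvPowerSeries (Fin 2) k) ^ q ∣ u - v) :
    (X 1 : MvPowerSeries (Fin 2) k) ^ q ∣ Ring.inverse u - Ring.inverse v := by
  have key : Ring.inverse u - Ring.inverse v = Ring.inverse u * (v - u) * Ring.inverse v := by
    have h1 := Ring.inverse_mul_cancel u hu
    have h2 := Ring.mul_inverse_cancel v hv
    calc Ring.inverse u - Ring.inverse v
        = Ring.inverse u * (v * Ring.inverse v) - (Ring.inverse u * u) * Ring.inverse v := by
          rw [h1, h2]; ring
      _ = Ring.inverse u * (v - u) * Ring.inverse v := by ring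
  rw [key]
  have hvu : (X 1 : MvPowerSeries (Fin 2) k) ^ q ∣ v - u := (dvd_sub_comm).mp h
  exact (hvu.mul_left _).mul_right _

private noncomputable def bs (M : ℕ) (η : ℕ → ℕ) (a : ℕ → MvPowerSeries (Fin 2) k)
    (u : MvPowerSeries (Fin 2) k) : ℕ → MvPowerSeries (Fin 2) k
  | 0 => 0
  | j + 1 => Ring.inverse u *
      (a (M + 1 - j) - (X 1 : MvPowerSeries (Fin 2) k) ^ (η 1 - η (M + 1 - j + 1)) *
        bs M η a u j)

private noncomputable def Tm (M : ℕ) (η : ℕ → ℕ) (a : ℕ → MvPowerSeries (Fin 2) k)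
    (u : MvPowerSeries (Fin 2) k) : MvPowerSeries (Fin 2) k :=
  a 1 - (X 1 : MvPowerSeries (Fin 2) k) ^ (η 1 - η 2) * bs M η a u M

private noncomputable def cfix (M : ℕ) (η : ℕ → ℕ) (a : ℕ → MvPowerSeries (Fin 2) k) :
    MvPowerSeries (Fin 2) k :=
  fun d => coeff d ((Tm M η a)^[d 1 + 1] (a 1))

private lemma coeff_cfix (M : ℕ) (η : ℕ → ℕ) (a : ℕ → MvPowerSeries (Fin 2) k)
    (d : Fin 2 →₀ ℕ) : coeff d (cfix M η a) = coeff d ((Tm M η a)^[d 1 + 1] (a 1)) := rfl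

private lemma step (M : ℕ) (η : ℕ → ℕ)
    (hηstrict : ∀ i ∈ Icc 1 (M + 1), ∀ j ∈ Icc 1 (M + 1), i < j → η j < η i)
    (γ : ℕ → ℕ) (hγ : ∀ i, γ i = ∑ t ∈ Icc (i + 1) (M + 1), η t)
    (a : ℕ → MvPowerSeries (Fin 2) k) (ha : ∀ i ∈ Icc 1 (M + 1), IsUnit (a i)) :
    ∃ c : MvPowerSeries (Fin 2) k, ∃ b : ℕ → MvPowerSeries (Fin 2) k,
      IsUnit c ∧ (∀ i ∈ Icc 2 (M + 1), IsUnit (b i)) ∧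
      (X 1 : MvPowerSeries (Fin 2) k) ^ γ 0
          + ∑ i ∈ Icc 1 (M + 1), a i * (X 0 : MvPowerSeries (Fin 2) k) ^ i
              * (X 1 : MvPowerSeries (Fin 2) k) ^ γ i
        = ((X 1 : MvPowerSeries (Fin 2) k) ^ η 1 + c * (X 0 : MvPowerSeries (Fin 2) k)) *
          ((X 1 : MvPowerSeries (Fin 2) k) ^ γ 1
            + ∑ i ∈ Icc 1 M, b (i + 1) * (X 0 : MvPowerSeries (Fin 2) k) ^ i
                * (X 1 : MvPowerSeries (Fin 2) k) ^ γ (i + 1)) := by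
  have h_bs_succ : ∀ (u : MvPowerSeries (Fin 2) k) (j : ℕ),
      bs M η a u (j + 1) = Ring.inverse u *
        (a (M + 1 - j) - (X 1 : MvPowerSeries (Fin 2) k) ^ (η 1 - η (M + 1 - j + 1)) *
          bs M η a u j) := fun _ _ => rfl
  have ha1 : IsUnit (a 1) := ha 1 (by simp only [mem_Icc]; omega)
  -- constant coefficient of T u
  have hccT : ∀ u : MvPowerSeries (Fin 2) k,
      constantCoeff (Tm M η a u) = constantCoeff (a 1) := by
    intro u
    have h0 : constantCoeff
        ((X 1 : MvPowerSeries (Fin 2) k) ^ (η 1 - η 2) * bs M η a u M) = 0 := by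
      cases M with
      | zero => simp [bs]
      | succ M' =>
        have h2 : η 2 < η 1 :=
          hηstrict 1 (by simp only [mem_Icc]; omega) 2 (by simp only [mem_Icc]; omega) one_lt_two
        rw [map_mul, map_pow, constantCoeff_X, zero_pow (by omega), zero_mul]
    rw [Tm, map_sub, h0, sub_zero]
  have hTunit : ∀ u : MvPowerSeries (Fin 2) k, IsUnit (Tm M η a u) := by
    intro u
    rw [isUnit_iff_constantCoeff, hccT]
    exact isUnit_iff_constantCoeff.1 ha1
  have hItunit : ∀ n, IsUnit ((Tm M η a)^[n] (a 1)) := by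
    intro n
    cases n with
    | zero => exact ha1
    | succ n => rw [Function.iterate_succ_apply']; exact hTunit _
  -- contraction for bs
  have hbs_sub : ∀ (q : ℕ) (u v : MvPowerSeries (Fin 2) k), IsUnit u → IsUnit v →
      (X 1 : MvPowerSeries (Fin 2) k) ^ q ∣ u - v →
      ∀ j, (X 1 : MvPowerSeries (Fin 2) k) ^ q ∣ bs M η a u j - bs M η a v j := by
    intro q u v hu hv h j
    induction j with
    | zero => simp [bs]
    | succ j ih =>
      obtain ⟨w1, hw1⟩ := inv_sub_dvd q hu hv h
      obtain ⟨w2, hw2⟩ := ih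
      refine ⟨w1 * (a (M + 1 - j) - (X 1 : MvPowerSeries (Fin 2) k) ^ (η 1 - η (M + 1 - j + 1))
          * bs M η a u j)
        - Ring.inverse v * ((X 1 : MvPowerSeries (Fin 2) k) ^ (η 1 - η (M + 1 - j + 1)) * w2), ?_⟩
      rw [h_bs_succ, h_bs_succ]
      linear_combination (a (M + 1 - j) - (X 1 : MvPowerSeries (Fin 2) k)
          ^ (η 1 - η (M + 1 - j + 1)) * bs M η a u j) * hw1
        - Ring.inverse v * (X 1 : MvPowerSeries (Fin 2) k) ^ (η 1 - η (M + 1 - j + 1)) * hw2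
  -- contraction for T
  have hT_sub : ∀ (q : ℕ) (u v : MvPowerSeries (Fin 2) k), IsUnit u → IsUnit v →
      (X 1 : MvPowerSeries (Fin 2) k) ^ q ∣ u - v →
      (X 1 : MvPowerSeries (Fin 2) k) ^ (q + 1) ∣ Tm M η a u - Tm M η a v := by
    intro q u v hu hv h
    cases M with
    | zero => simp [Tm, bs]
    | succ M' =>
      have h2 : η 2 < η 1 :=
        hηstrict 1 (by simp only [mem_Icc]; omega) 2 (by simp only [mem_Icc]; omega) one_lt_two
      obtain ⟨w, hw⟩ := hbs_sub q u v hu hv h (M' + 1)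
      refine ⟨-((X 1 : MvPowerSeries (Fin 2) k) ^ (η 1 - η 2 - 1) * w), ?_⟩
      have hsplit : (X 1 : MvPowerSeries (Fin 2) k) ^ (η 1 - η 2)
          = X 1 * (X 1 : MvPowerSeries (Fin 2) k) ^ (η 1 - η 2 - 1) := by
        conv_lhs => rw [show η 1 - η 2 = 1 + (η 1 - η 2 - 1) by omega]
        rw [pow_add, pow_one]
      rw [Tm, Tm, hsplit]
      linear_combination (-(X 1 * (X 1 : MvPowerSeries (Fin 2) k) ^ (η 1 - η 2 - 1))) * hw
  -- consecutive iterates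
  have hdn : ∀ n, (X 1 : MvPowerSeries (Fin 2) k) ^ n ∣
      (Tm M η a)^[n + 1] (a 1) - (Tm M η a)^[n] (a 1) := by
    intro n
    induction n with
    | zero => simp
    | succ n ih =>
      rw [Function.iterate_succ_apply' (Tm M η a) (n + 1)]
      nth_rewrite 2 [Function.iterate_succ_apply' (Tm M η a) n]
      exact hT_sub n _ _ (hItunit (n + 1)) (hItunit n) ih
  have hstab : ∀ n m, n ≤ m → (X 1 : MvPowerSeries (Fin 2) k) ^ n ∣
      (Tm M η a)^[m] (a 1) - (Tm M η a)^[n] (a 1) := by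
    intro n m hnm
    induction m, hnm using Nat.le_induction with
    | base => simp
    | succ m hm ih =>
      have h1 : (X 1 : MvPowerSeries (Fin 2) k) ^ n ∣
          (Tm M η a)^[m + 1] (a 1) - (Tm M η a)^[m] (a 1) :=
        (pow_dvd_pow _ hm).trans (hdn m)
      have h2 := dvd_add h1 ih
      rwa [sub_add_sub_cancel] at h2
  have hcstab : ∀ q, (X 1 : MvPowerSeries (Fin 2) k) ^ q ∣
      cfix M η a - (Tm M η a)^[q] (a 1) := by
    intro q
    rw [X_pow_dvd_iff]
    intro d hd
    have key : ∀ n, d 1 < n → coeff d ((Tm M η a)^[n] (a 1))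
        = coeff d ((Tm M η a)^[max (d 1 + 1) q] (a 1)) := by
      intro n hn
      have h1 := hstab n (max n (max (d 1 + 1) q)) (le_max_left _ _)
      have h2 := hstab (max (d 1 + 1) q) (max n (max (d 1 + 1) q)) (le_max_right _ _)
      rw [X_pow_dvd_iff] at h1 h2
      have e1 := h1 d (by omega)
      have e2 := h2 d (by omega : d 1 < max (d 1 + 1) q)
      rw [map_sub, sub_eq_zero] at e1 e2
      rw [← e1, ← e2]
    rw [map_sub, coeff_cfix, key (d 1 + 1) (lt_add_one _), key q hd, sub_self]
  have hcunit : IsUnit (cfix M η a) := by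
    have h1 : constantCoeff (cfix M η a) = constantCoeff (a 1) := by
      rw [← coeff_zero_eq_constantCoeff_apply, coeff_cfix]
      norm_num
      exact hccT _
    rw [isUnit_iff_constantCoeff, h1]
    exact isUnit_iff_constantCoeff.1 ha1
  have hfix : Tm M η a (cfix M η a) = cfix M η a := by
    have hq : ∀ q, (X 1 : MvPowerSeries (Fin 2) k) ^ q ∣
        Tm M η a (cfix M η a) - cfix M η a := by
      intro q
      have h1 : (X 1 : MvPowerSeries (Fin 2) k) ^ (q + 1) ∣
          Tm M η a (cfix M η a) - (Tm M η a)^[q + 1] (a 1) := by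
        rw [Function.iterate_succ_apply']
        exact hT_sub q _ _ hcunit (hItunit q) (hcstab q)
      have h1' : (X 1 : MvPowerSeries (Fin 2) k) ^ q ∣
          Tm M η a (cfix M η a) - (Tm M η a)^[q + 1] (a 1) :=
        (pow_dvd_pow _ (Nat.le_succ q)).trans h1
      have h2 := hdn q
      have h3 := dvd_sub_comm.mp (hcstab q)
      have h4 := dvd_add (dvd_add h1' h2) h3
      rwa [sub_add_sub_cancel, sub_add_sub_cancel] at h4
    have := ydvd_all_eq_zero hq
    exact sub_eq_zero.mp this
  set c : MvPowerSeries (Fin 2) k := cfix M η a with hc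
  set b : ℕ → MvPowerSeries (Fin 2) k := fun i => bs M η a c (M + 2 - i) with hb
  have hb_top : b (M + 2) = 0 := by
    show bs M η a c (M + 2 - (M + 2)) = 0
    rw [Nat.sub_self]
    rfl
  have hbi : ∀ i, 2 ≤ i → i ≤ M + 1 →
      b i = Ring.inverse c * (a i
        - (X 1 : MvPowerSeries (Fin 2) k) ^ (η 1 - η (i + 1)) * b (i + 1)) := by
    intro i h2 h3
    show bs M η a c (M + 2 - i) = _
    rw [show M + 2 - i = (M + 1 - i) + 1 by omega, h_bs_succ,
      show M + 1 - (M + 1 - i) = i by omega, show M + 1 - i = M + 2 - (i + 1) by omega]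
  have hbrec : ∀ i, 2 ≤ i → i ≤ M + 1 →
      c * b i = a i - (X 1 : MvPowerSeries (Fin 2) k) ^ (η 1 - η (i + 1)) * b (i + 1) := by
    intro i h2 h3
    rw [hbi i h2 h3, ← mul_assoc, Ring.mul_inverse_cancel _ hcunit, one_mul]
  have hbunit : ∀ i ∈ Icc 2 (M + 1), IsUnit (b i) := by
    intro i hi
    rw [mem_Icc] at hi
    have hcc2 : constantCoeff
        ((X 1 : MvPowerSeries (Fin 2) k) ^ (η 1 - η (i + 1)) * b (i + 1)) = 0 := by
      rcases eq_or_lt_of_le hi.2 with rfl | hlt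
      · rw [hb_top, mul_zero, map_zero]
      · have hlt2 : η (i + 1) < η 1 := hηstrict 1 (by simp only [mem_Icc]; omega) (i + 1)
          (by simp only [mem_Icc]; omega) (by omega)
        rw [map_mul, map_pow, constantCoeff_X, zero_pow (by omega), zero_mul]
    rw [hbi i hi.1 hi.2]
    refine (isUnit_ringInverse.2 hcunit).mul (isUnit_iff_constantCoeff.2 ?_)
    rw [map_sub, hcc2, sub_zero]
    exact isUnit_iff_constantCoeff.1 (ha i (by simp only [mem_Icc]; omega))
  have hfix' : a 1 = c + (X 1 : MvPowerSeries (Fin 2) k) ^ (η 1 - η 2) * b 2 := by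
    have h := hfix
    rw [Tm] at h
    have hb2 : b 2 = bs M η a c M := by
      show bs M η a c (M + 2 - 2) = _
      norm_num
    rw [hb2]
    linear_combination h
  refine ⟨c, b, hcunit, hbunit, ?_⟩
  -- the product identity
  have hγs : ∀ i, i ≤ M → γ i = η (i + 1) + γ (i + 1) := by
    intro i hi
    rw [hγ i, hγ (i + 1),
      show Icc (i + 1) (M + 1) = insert (i + 1) (Icc (i + 2) (M + 1)) from by
        ext t; simp only [mem_Icc, mem_insert]; omega,
      sum_insert (by simp only [mem_Icc]; omega)]
  have hexp : ∀ i, 1 ≤ i → i ≤ M → η 1 + γ (i + 1) = (η 1 - η (i + 1)) + γ i := by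
    intro i h1 h2
    have h3 : η (i + 1) < η 1 := hηstrict 1 (by simp only [mem_Icc]; omega) (i + 1)
      (by simp only [mem_Icc]; omega) (by omega)
    have := hγs i h2
    omega
  have h1 : (∑ i ∈ Icc 1 (M + 1), a i * (X 0 : MvPowerSeries (Fin 2) k) ^ i
        * (X 1 : MvPowerSeries (Fin 2) k) ^ γ i)
      = a 1 * (X 0 : MvPowerSeries (Fin 2) k) ^ 1 * (X 1 : MvPowerSeries (Fin 2) k) ^ γ 1
        + ∑ i ∈ Icc 2 (M + 1), a i * (X 0 : MvPowerSeries (Fin 2) k) ^ i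
            * (X 1 : MvPowerSeries (Fin 2) k) ^ γ i := by
    rw [icc_insert M, sum_insert (by simp only [mem_Icc]; omega)]
  have h2 : ∑ i ∈ Icc 2 (M + 1), a i * (X 0 : MvPowerSeries (Fin 2) k) ^ i
        * (X 1 : MvPowerSeries (Fin 2) k) ^ γ i
      = (∑ i ∈ Icc 2 (M + 1), (c * b i) * (X 0 : MvPowerSeries (Fin 2) k) ^ i
          * (X 1 : MvPowerSeries (Fin 2) k) ^ γ i)
        + ∑ i ∈ Icc 2 (M + 1), ((X 1 : MvPowerSeries (Fin 2) k) ^ (η 1 - η (i + 1)) * b (i + 1))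
            * (X 0 : MvPowerSeries (Fin 2) k) ^ i * (X 1 : MvPowerSeries (Fin 2) k) ^ γ i := by
    rw [← sum_add_distrib]
    refine sum_congr rfl fun i hi => ?_
    rw [mem_Icc] at hi
    linear_combination (-((X 0 : MvPowerSeries (Fin 2) k) ^ i
      * (X 1 : MvPowerSeries (Fin 2) k) ^ γ i)) * (hbrec i hi.1 hi.2)
  have hG_top : ((X 1 : MvPowerSeries (Fin 2) k) ^ (η 1 - η (M + 1 + 1)) * b (M + 1 + 1))
      * (X 0 : MvPowerSeries (Fin 2) k) ^ (M + 1)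
      * (X 1 : MvPowerSeries (Fin 2) k) ^ γ (M + 1) = 0 := by
    rw [show M + 1 + 1 = M + 2 from rfl, hb_top, mul_zero, zero_mul, zero_mul]
  have htop : ∑ i ∈ Icc 1 (M + 1), ((X 1 : MvPowerSeries (Fin 2) k) ^ (η 1 - η (i + 1)) * b (i + 1))
        * (X 0 : MvPowerSeries (Fin 2) k) ^ i * (X 1 : MvPowerSeries (Fin 2) k) ^ γ i
      = (∑ i ∈ Icc 1 M, ((X 1 : MvPowerSeries (Fin 2) k) ^ (η 1 - η (i + 1)) * b (i + 1))
          * (X 0 : MvPowerSeries (Fin 2) k) ^ i * (X 1 : MvPowerSeries (Fin 2) k) ^ γ i)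
        + ((X 1 : MvPowerSeries (Fin 2) k) ^ (η 1 - η (M + 1 + 1)) * b (M + 1 + 1))
            * (X 0 : MvPowerSeries (Fin 2) k) ^ (M + 1)
            * (X 1 : MvPowerSeries (Fin 2) k) ^ γ (M + 1) :=
    Finset.sum_Icc_succ_top (by omega) _
  have hbot : ∑ i ∈ Icc 1 (M + 1), ((X 1 : MvPowerSeries (Fin 2) k) ^ (η 1 - η (i + 1)) * b (i + 1))
        * (X 0 : MvPowerSeries (Fin 2) k) ^ i * (X 1 : MvPowerSeries (Fin 2) k) ^ γ i
      = ((X 1 : MvPowerSeries (Fin 2) k) ^ (η 1 - η (1 + 1)) * b (1 + 1))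
          * (X 0 : MvPowerSeries (Fin 2) k) ^ 1 * (X 1 : MvPowerSeries (Fin 2) k) ^ γ 1
        + ∑ i ∈ Icc 2 (M + 1), ((X 1 : MvPowerSeries (Fin 2) k) ^ (η 1 - η (i + 1)) * b (i + 1))
            * (X 0 : MvPowerSeries (Fin 2) k) ^ i * (X 1 : MvPowerSeries (Fin 2) k) ^ γ i := by
    rw [icc_insert M, sum_insert (by simp only [mem_Icc]; omega)]
  have hS1 : ∑ i ∈ Icc 1 M, ((X 1 : MvPowerSeries (Fin 2) k) ^ (η 1 - η (i + 1)) * b (i + 1))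
        * (X 0 : MvPowerSeries (Fin 2) k) ^ i * (X 1 : MvPowerSeries (Fin 2) k) ^ γ i
      = ((X 1 : MvPowerSeries (Fin 2) k) ^ (η 1 - η (1 + 1)) * b (1 + 1))
          * (X 0 : MvPowerSeries (Fin 2) k) ^ 1 * (X 1 : MvPowerSeries (Fin 2) k) ^ γ 1
        + ∑ i ∈ Icc 2 (M + 1), ((X 1 : MvPowerSeries (Fin 2) k) ^ (η 1 - η (i + 1)) * b (i + 1))
            * (X 0 : MvPowerSeries (Fin 2) k) ^ i * (X 1 : MvPowerSeries (Fin 2) k) ^ γ i := by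
    linear_combination hbot - htop - hG_top
  have hyS : (X 1 : MvPowerSeries (Fin 2) k) ^ η 1
        * ∑ i ∈ Icc 1 M, b (i + 1) * (X 0 : MvPowerSeries (Fin 2) k) ^ i
            * (X 1 : MvPowerSeries (Fin 2) k) ^ γ (i + 1)
      = ∑ i ∈ Icc 1 M, ((X 1 : MvPowerSeries (Fin 2) k) ^ (η 1 - η (i + 1)) * b (i + 1))
          * (X 0 : MvPowerSeries (Fin 2) k) ^ i * (X 1 : MvPowerSeries (Fin 2) k) ^ γ i := by
    rw [mul_sum]
    refine sum_congr rfl fun i hi => ?_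
    rw [mem_Icc] at hi
    have h5 : (X 1 : MvPowerSeries (Fin 2) k) ^ η 1 * (X 1 : MvPowerSeries (Fin 2) k) ^ γ (i + 1)
        = (X 1 : MvPowerSeries (Fin 2) k) ^ (η 1 - η (i + 1))
          * (X 1 : MvPowerSeries (Fin 2) k) ^ γ i := by
      rw [← pow_add, ← pow_add, hexp i hi.1 hi.2]
    linear_combination (b (i + 1) * (X 0 : MvPowerSeries (Fin 2) k) ^ i) * h5
  have hcxS : c * (X 0 : MvPowerSeries (Fin 2) k)
        * ∑ i ∈ Icc 1 M, b (i + 1) * (X 0 : MvPowerSeries (Fin 2) k) ^ i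
            * (X 1 : MvPowerSeries (Fin 2) k) ^ γ (i + 1)
      = ∑ i ∈ Icc 2 (M + 1), (c * b i) * (X 0 : MvPowerSeries (Fin 2) k) ^ i
          * (X 1 : MvPowerSeries (Fin 2) k) ^ γ i := by
    rw [sum_shift2 M, mul_sum]
    refine sum_congr rfl fun i hi => ?_
    ring
  have hy0 : (X 1 : MvPowerSeries (Fin 2) k) ^ γ 0
      = (X 1 : MvPowerSeries (Fin 2) k) ^ η 1 * (X 1 : MvPowerSeries (Fin 2) k) ^ γ 1 := by
    rw [← pow_add, ← hγs 0 (by omega)]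
  have hG1 : ((X 1 : MvPowerSeries (Fin 2) k) ^ (η 1 - η (1 + 1)) * b (1 + 1))
        * (X 0 : MvPowerSeries (Fin 2) k) ^ 1 * (X 1 : MvPowerSeries (Fin 2) k) ^ γ 1
      = ((X 1 : MvPowerSeries (Fin 2) k) ^ (η 1 - η 2) * b 2)
        * (X 0 : MvPowerSeries (Fin 2) k) ^ 1 * (X 1 : MvPowerSeries (Fin 2) k) ^ γ 1 := by
    norm_num
  linear_combination h1 + h2 + hy0
    + ((X 0 : MvPowerSeries (Fin 2) k) ^ 1 * (X 1 : MvPowerSeries (Fin 2) k) ^ γ 1) * hfix'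
    - hyS - hcxS - hS1 + hG1

end Aux



/-- Existence part of the factorization lemma: for strictly decreasing `η₁ > … > η_s`,
every `f ∈ P_η⁰ ⊆ k⟦x,y⟧` factorizes as `f = ∏ᵢ (y^{ηᵢ} + cᵢ·x)` with the `cᵢ` units. -/
theorem stmt_2 (k : Type*) [Field k] (s : ℕ)
    (η : ℕ → ℕ) (hηpos : ∀ i ∈ Finset.Icc 1 s, 0 < η i)
    (hηstrict : ∀ i ∈ Finset.Icc 1 s, ∀ j ∈ Finset.Icc 1 s, i < j → η j < η i)
    (γ : ℕ → ℕ) (hγ : ∀ i, γ i = ∑ t ∈ Finset.Icc (i + 1) s, η t)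
    (a : ℕ → MvPowerSeries (Fin 2) k) (ha : ∀ i ∈ Finset.Icc 1 s, IsUnit (a i))
    (f : MvPowerSeries (Fin 2) k)
    (hf : f = (X 1 : MvPowerSeries (Fin 2) k) ^ γ 0
      + ∑ i ∈ Finset.Icc 1 s, a i * (X 0 : MvPowerSeries (Fin 2) k) ^ i
          * (X 1 : MvPowerSeries (Fin 2) k) ^ γ i) :
    ∃ c : ℕ → MvPowerSeries (Fin 2) k,
      (∀ i ∈ Finset.Icc 1 s, IsUnit (c i)) ∧
      f = ∏ i ∈ Finset.Icc 1 s,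
        ((X 1 : MvPowerSeries (Fin 2) k) ^ η i + c i * (X 0 : MvPowerSeries (Fin 2) k)) := by
  induction s generalizing η γ a f with
  | zero =>
    refine ⟨fun _ => 1, by simp, ?_⟩
    have h0 : γ 0 = 0 := by rw [hγ 0]; simp
    simp [hf, h0]
  | succ M ih =>
    obtain ⟨c, b, hcu, hbu, hkey⟩ := step M η hηstrict γ hγ a ha
    obtain ⟨c', hc'u, hc'⟩ := ih (fun i => η (i + 1))
      (fun i hi => hηpos (i + 1) (by rw [Finset.mem_Icc] at hi ⊢; omega))
      (fun i hi j hj hij => hηstrict (i + 1) (by rw [Finset.mem_Icc] at hi ⊢; omega)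
        (j + 1) (by rw [Finset.mem_Icc] at hj ⊢; omega) (by omega))
      (fun i => γ (i + 1))
      (fun i => by
        show γ (i + 1) = ∑ t ∈ Finset.Icc (i + 1) M, η (t + 1)
        rw [hγ (i + 1)]
        exact sum_shift' (i + 1) M η)
      (fun i => b (i + 1))
      (fun i hi => hbu (i + 1) (by rw [Finset.mem_Icc] at hi ⊢; omega))
      ((X 1 : MvPowerSeries (Fin 2) k) ^ γ 1
        + ∑ i ∈ Finset.Icc 1 M, b (i + 1) * (X 0 : MvPowerSeries (Fin 2) k) ^ i
            * (X 1 : MvPowerSeries (Fin 2) k) ^ γ (i + 1)) rfl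
    refine ⟨fun i => if i = 1 then c else c' (i - 1), ?_, ?_⟩
    · intro i hi
      rw [Finset.mem_Icc] at hi
      by_cases h1 : i = 1
      · simpa [h1] using hcu
      · simp only [h1, if_false]
        exact hc'u (i - 1) (by rw [Finset.mem_Icc]; omega)
    · rw [hf, hkey, hc', icc_insert M,
        Finset.prod_insert (by simp only [Finset.mem_Icc]; omega)]
      beta_reduce
      rw [if_pos rfl,
        prod_shift2 M (fun i => (X 1 : MvPowerSeries (Fin 2) k) ^ η i
          + (if i = 1 then c else c' (i - 1)) * (X 0 : MvPowerSeries (Fin 2) k))]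
      congr 1
      refine Finset.prod_congr rfl fun i hi => ?_
      rw [Finset.mem_Icc] at hi
      rw [if_neg (by omega)]
      simp
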